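/- Let n ≥ 1 be an integer and let A be a set of positive integers such that for every prime number p > n, the set of elements of A divisible by p is finite. Then A has natural density 0. -/

import Mathlib

open Filter

/-- There is a finite set of primes, all bigger than `n`, with `∏ (1 - 1/p)` as small
as we like. -/
lemma exists_primes_prod_lt (n : ℕ) {ε : ℝ} (hε : 0 < ε) :
    ∃ S : Finset ℕ, (∀ p ∈ S, p.Prime ∧ n < p) ∧
      ∏ p ∈ S, (1 - (p : ℝ)⁻¹) < ε := by
  -- the sum of 1/p over primes p > n diverges
  have hns : ¬ Summable (fun k : ℕ => if k.Prime ∧ n < k then (1 : ℝ)/k else 0) := by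
    intro hs
    apply not_summable_one_div_on_primes
    have hsmall : Summable (fun k : ℕ => if k.Prime ∧ k ≤ n then (1 : ℝ)/k else 0) := by
      apply summable_of_finite_support
      apply Set.Finite.subset (Set.finite_Icc 0 n)
      intro k hk
      simp only [Function.mem_support, ne_eq, ite_eq_right_iff, not_forall] at hk
      obtain ⟨⟨-, hkn⟩, -⟩ := hk
      exact Set.mem_Icc.mpr ⟨Nat.zero_le _, hkn⟩
    have heq : Set.indicator {p : ℕ | p.Prime} (fun k : ℕ => (1 : ℝ)/k)
        = (fun k : ℕ => if k.Prime ∧ n < k then (1 : ℝ)/k else 0)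
          + (fun k : ℕ => if k.Prime ∧ k ≤ n then (1 : ℝ)/k else 0) := by
      funext k
      by_cases hp : k.Prime
      · rcases lt_or_ge n k with hk | hk
        · simp [Set.indicator, hp, hk, not_le.mpr hk]
        · simp [Set.indicator, hp, hk, not_lt.mpr hk]
      · simp [Set.indicator, hp]
    rw [heq]
    exact hs.add hsmall
  have hdiv := (not_summable_iff_tendsto_nat_atTop_of_nonneg
    (fun k => by positivity)).mp hns
  obtain ⟨x, hx⟩ := (Real.tendsto_exp_atBot.eventually (gt_mem_nhds hε)).exists
  obtain ⟨m, hm⟩ := (hdiv.eventually_gt_atTop (-x)).exists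
  refine ⟨(Finset.range m).filter (fun k => k.Prime ∧ n < k), ?_, ?_⟩
  · intro p hp
    exact (Finset.mem_filter.mp hp).2
  · have hsum : -x < ∑ p ∈ (Finset.range m).filter (fun k => k.Prime ∧ n < k),
        (1 : ℝ)/p := by
      rwa [Finset.sum_filter]
    calc ∏ p ∈ (Finset.range m).filter (fun k => k.Prime ∧ n < k), (1 - (p : ℝ)⁻¹)
        ≤ ∏ p ∈ (Finset.range m).filter (fun k => k.Prime ∧ n < k),
            Real.exp (-(p : ℝ)⁻¹) := by
          apply Finset.prod_le_prod
          · intro p hp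
            have hp2 : 2 ≤ p := ((Finset.mem_filter.mp hp).2.1).two_le
            have : (p : ℝ)⁻¹ ≤ 1 := by
              rw [inv_le_one_iff₀]
              right
              exact_mod_cast le_trans one_le_two hp2
            linarith
          · intro p _
            have := Real.add_one_le_exp (-(p : ℝ)⁻¹)
            linarith
      _ = Real.exp (-∑ p ∈ (Finset.range m).filter (fun k => k.Prime ∧ n < k),
            (1 : ℝ)/p) := by
          rw [← Real.exp_sum, ← Finset.sum_neg_distrib]
          congr 1
          apply Finset.sum_congr rfl
          intro p _
          rw [one_div]
      _ < Real.exp x := by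
          apply Real.exp_lt_exp.mpr
          linarith
      _ < ε := hx

theorem density_zero_of_finite_multiples_of_large_primes
    (n : ℕ) (hn : 1 ≤ n) (A : Set ℕ) (hA : ∀ a ∈ A, 0 < a)
    (hfin : ∀ p : ℕ, p.Prime → n < p → {a ∈ A | p ∣ a}.Finite) :
    Filter.Tendsto (fun m : ℕ => ((A ∩ Set.Icc 1 m).ncard : ℝ) / m)
      Filter.atTop (nhds 0) := by
  rw [NormedAddCommGroup.tendsto_nhds_zero]
  intro ε hε
  obtain ⟨S, hS, hSprod⟩ := exists_primes_prod_lt n (half_pos hε)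
  set N := ∏ p ∈ S, p with hNdef
  have hN0 : 0 < N := Finset.prod_pos fun p hp => (hS p hp).1.pos
  have hPF : N.primeFactors = S := Nat.primeFactors_prod fun p hp => (hS p hp).1
  -- Euler's product formula over ℝ
  have hφ : (N.totient : ℝ) = (N : ℝ) * ∏ p ∈ S, (1 - (p : ℝ)⁻¹) := by
    have h := Nat.totient_eq_mul_prod_factors N
    rw [hPF] at h
    have h2 := congrArg (fun q : ℚ => (q : ℝ)) h
    push_cast at h2
    exact_mod_cast h2
  -- the finite exceptional set
  have hF : {a | a ∈ A ∧ ∃ p ∈ S, p ∣ a}.Finite := by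
    apply Set.Finite.subset (Set.Finite.biUnion S.finite_toSet
      fun p hp => hfin p (hS p hp).1 (hS p hp).2)
    rintro a ⟨ha, p, hp, hdvd⟩
    exact Set.mem_biUnion hp ⟨ha, hdvd⟩
  set C := hF.toFinset.card with hCdef
  -- the key counting estimate
  have key : ∀ m : ℕ, (A ∩ Set.Icc 1 m).ncard ≤ C + N.totient * (m / N + 1) := by
    intro m
    set T := hF.toFinset ∪ (Finset.Ico 1 (1 + m)).filter (N.Coprime ·) with hTdef
    have hsub : A ∩ Set.Icc 1 m ⊆ ↑T := by
      rintro a ⟨haA, ha1, ham⟩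
      by_cases h : ∃ p ∈ S, p ∣ a
      · exact Finset.mem_coe.mpr (Finset.mem_union_left _ (hF.mem_toFinset.mpr ⟨haA, h⟩))
      · apply Finset.mem_coe.mpr (Finset.mem_union_right _ _)
        rw [Finset.mem_filter]
        refine ⟨Finset.mem_Ico.mpr ⟨ha1, by omega⟩, ?_⟩
        by_contra hcop
        obtain ⟨q, hq, hqd⟩ := Nat.exists_prime_and_dvd hcop
        have hqN : q ∣ N := hqd.trans (Nat.gcd_dvd_left _ _)
        have hqa : q ∣ a := hqd.trans (Nat.gcd_dvd_right _ _)
        have : q ∈ S := hPF ▸ Nat.mem_primeFactors.mpr ⟨hq, hqN, hN0.ne'⟩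
        exact h ⟨q, this, hqa⟩
    calc (A ∩ Set.Icc 1 m).ncard ≤ (↑T : Set ℕ).ncard :=
          Set.ncard_le_ncard hsub T.finite_toSet
      _ = T.card := Set.ncard_coe_finset T
      _ ≤ C + ((Finset.Ico 1 (1 + m)).filter (N.Coprime ·)).card := Finset.card_union_le _ _
      _ ≤ C + N.totient * (m / N + 1) := by
          gcongr
          exact Nat.Ico_filter_coprime_le 1 m hN0.ne'
  -- the dominating sequence
  have hg : Tendsto (fun m : ℕ => ((C : ℝ) + N.totient) / m + ∏ p ∈ S, (1 - (p : ℝ)⁻¹))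
      atTop (nhds (0 + ∏ p ∈ S, (1 - (p : ℝ)⁻¹))) :=
    (tendsto_const_div_atTop_nhds_zero_nat _).add tendsto_const_nhds
  rw [zero_add] at hg
  have hglt : ∀ᶠ m : ℕ in atTop,
      ((C : ℝ) + N.totient) / m + ∏ p ∈ S, (1 - (p : ℝ)⁻¹) < ε :=
    hg.eventually_lt_const (by linarith)
  filter_upwards [hglt, eventually_ge_atTop 1] with m hgm hm1
  have hm0 : (0 : ℝ) < m := by exact_mod_cast hm1
  have hN0' : (0 : ℝ) < N := by exact_mod_cast hN0
  rw [Real.norm_eq_abs, abs_of_nonneg (by positivity)]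
  have hprodNN : ∏ p ∈ S, (1 - (p : ℝ)⁻¹) = (N.totient : ℝ) / N := by
    rw [hφ]; field_simp
  calc ((A ∩ Set.Icc 1 m).ncard : ℝ) / m
      ≤ ((C + N.totient * (m / N + 1) : ℕ) : ℝ) / m := by
        gcongr
        exact_mod_cast key m
    _ ≤ ((C : ℝ) + (N.totient : ℝ) * ((m : ℝ) / N + 1)) / m := by
        gcongr
        push_cast
        gcongr
        exact Nat.cast_div_le
    _ = ((C : ℝ) + N.totient) / m + (N.totient : ℝ) / N := by
        field_simp
        ring
    _ = ((C : ℝ) + N.totient) / m + ∏ p ∈ S, (1 - (p : ℝ)⁻¹) := by rw [hprodNN]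
    _ < ε := hgm
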